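/- Assume λ + μ² ≠ 0 and let P, Q, R, S be a pqrs-quad satisfying the three constraints Q(iπ/2) − μ·P(iπ/2) + R(iπ/2) = 0, μ·P(0) + Q(0) + R(0) = 0, and λ·P(0) − μ·Q(0) + S(0) = 0. Then the B-relations (semi-monodromy relations) hold: for every w ∈ ℂ, P(w+iπ) = e^{iℓπ}·(λ+μ²)⁻¹·(μ·e^{2w}·R(w) + S(w)); Q(w+iπ) = −e^{iℓπ}·((μ·e^{2w}·P(w) + Q(w)) + μ·(λ+μ²)⁻¹·e^{2w}·(μ·e^{2w}·R(w) + S(w))); R(w+iπ) = −e^{iℓπ}·R(w); S(w+iπ) = e^{iℓπ}·((λ+μ²)·P(w) + μ·e^{2w}·R(w)). -/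

import Mathlib

open Complex Set

lemma ode4_zero (g : Fin 4 → Fin 4 → ℂ → ℂ) (hg : ∀ i j, Continuous (g i j))
    (a : Fin 4 → ℂ → ℂ) (had : ∀ i, Differentiable ℂ (a i))
    (hsys : ∀ i w, deriv (a i) w = ∑ j, g i j w * a j w)
    (w0 : ℂ) (h0 : ∀ i, a i w0 = 0) : ∀ w i, a i w = 0 := by
  intro w
  set γ : ℝ → ℂ := fun t => w0 + (t : ℂ) * (w - w0) with hγ
  have hγc : Continuous γ := by
    apply continuous_const.add
    exact (Complex.continuous_ofReal.mul continuous_const)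
  set f : ℝ → (Fin 4 → ℂ) := fun t i => a i (γ t) with hf
  set f' : ℝ → (Fin 4 → ℂ) := fun t i => (w - w0) * ∑ j, g i j (γ t) * a j (γ t) with hf'
  have hd : ∀ t : ℝ, HasDerivAt f (f' t) t := by
    intro t
    rw [hasDerivAt_pi]
    intro i
    have hin : HasDerivAt (fun z : ℂ => w0 + z * (w - w0)) (w - w0) (t : ℂ) := by
      simpa using ((hasDerivAt_id (t : ℂ)).mul_const (w - w0)).const_add w0
    have h1 : HasDerivAt (fun z : ℂ => a i (w0 + z * (w - w0)))
        (deriv (a i) (γ t) * (w - w0)) (t : ℂ) :=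
      HasDerivAt.comp _ ((had i (γ t)).hasDerivAt) hin
    have h2 := h1.comp_ofReal
    have : deriv (a i) (γ t) * (w - w0) = f' t i := by
      rw [hsys i (γ t), hf']; ring
    rw [this] at h2
    exact h2
  set φ : ℝ → ℝ := fun t => ∑ i : Fin 4, ∑ j : Fin 4, ‖g i j (γ t)‖ with hφ
  have hφc : Continuous φ := by
    apply continuous_finset_sum
    intro i _
    apply continuous_finset_sum
    intro j _
    exact ((hg i j).comp hγc).norm
  obtain ⟨x0, hx0, hmax⟩ := isCompact_Icc.exists_isMaxOn (nonempty_Icc.2 (by norm_num : (0:ℝ) ≤ 1))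
      hφc.continuousOn
  have hφ0 : 0 ≤ φ x0 := Finset.sum_nonneg fun i _ => Finset.sum_nonneg fun j _ => norm_nonneg _
  set K : ℝ := ‖w - w0‖ * φ x0 with hK
  have hK0 : 0 ≤ K := mul_nonneg (norm_nonneg _) hφ0
  have hbound : ∀ t ∈ Ico (0:ℝ) 1, ‖f' t‖ ≤ K * ‖f t‖ + 0 := by
    intro t ht
    rw [add_zero]
    rw [pi_norm_le_iff_of_nonneg (by positivity)]
    intro i
    have e1 : ‖f' t i‖ = ‖w - w0‖ * ‖∑ j, g i j (γ t) * a j (γ t)‖ := norm_mul _ _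
    have e2 : ‖∑ j, g i j (γ t) * a j (γ t)‖ ≤ ∑ j, ‖g i j (γ t)‖ * ‖f t‖ := by
      refine (norm_sum_le _ _).trans ?_
      apply Finset.sum_le_sum
      intro j _
      rw [norm_mul]
      exact mul_le_mul_of_nonneg_left (norm_le_pi_norm (f t) j) (norm_nonneg _)
    have e3 : ∑ j, ‖g i j (γ t)‖ * ‖f t‖ = (∑ j, ‖g i j (γ t)‖) * ‖f t‖ :=
      (Finset.sum_mul _ _ _).symm
    have e4 : (∑ j, ‖g i j (γ t)‖) ≤ φ t := by
      apply Finset.single_le_sum (f := fun i => ∑ j, ‖g i j (γ t)‖)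
        (fun i _ => Finset.sum_nonneg fun j _ => norm_nonneg _) (Finset.mem_univ i)
    have e5 : φ t ≤ φ x0 := hmax ⟨ht.1, ht.2.le⟩
    calc ‖f' t i‖ = ‖w - w0‖ * ‖∑ j, g i j (γ t) * a j (γ t)‖ := e1
      _ ≤ ‖w - w0‖ * ((∑ j, ‖g i j (γ t)‖) * ‖f t‖) := by
          rw [← e3]; exact mul_le_mul_of_nonneg_left e2 (norm_nonneg _)
      _ ≤ ‖w - w0‖ * (φ x0 * ‖f t‖) := by
          apply mul_le_mul_of_nonneg_left _ (norm_nonneg _)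
          exact mul_le_mul_of_nonneg_right (e4.trans e5) (norm_nonneg _)
      _ = K * ‖f t‖ := by rw [hK]; ring
  have hf0 : f 0 = 0 := by
    funext i
    simp [hf, hγ, h0 i]
  have hmain := norm_le_gronwallBound_of_norm_deriv_right_le
    (f := f) (f' := f') (δ := 0) (K := K) (ε := 0) (a := 0) (b := 1)
    (fun t _ => (hd t).continuousAt.continuousWithinAt)
    (fun t _ => (hd t).hasDerivWithinAt)
    (by rw [hf0]; simp)
    hbound 1 ⟨by norm_num, le_refl 1⟩
  rw [gronwallBound_ε0_δ0] at hmain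
  have hf1 : f 1 = 0 := by
    have := norm_le_zero_iff.mp hmain
    exact this
  intro i
  have := congr_fun hf1 i
  simpa [hf, hγ] using this

lemma ode4_zero' (g00 g01 g02 g03 g10 g11 g12 g13 g20 g21 g22 g23 g30 g31 g32 g33 : ℂ → ℂ)
    (c00 : Continuous g00) (c01 : Continuous g01) (c02 : Continuous g02) (c03 : Continuous g03)
    (c10 : Continuous g10) (c11 : Continuous g11) (c12 : Continuous g12) (c13 : Continuous g13)
    (c20 : Continuous g20) (c21 : Continuous g21) (c22 : Continuous g22) (c23 : Continuous g23)
    (c30 : Continuous g30) (c31 : Continuous g31) (c32 : Continuous g32) (c33 : Continuous g33)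
    (a0 a1 a2 a3 : ℂ → ℂ)
    (d0 : Differentiable ℂ a0) (d1 : Differentiable ℂ a1)
    (d2 : Differentiable ℂ a2) (d3 : Differentiable ℂ a3)
    (h0 : ∀ w, deriv a0 w = g00 w * a0 w + g01 w * a1 w + g02 w * a2 w + g03 w * a3 w)
    (h1 : ∀ w, deriv a1 w = g10 w * a0 w + g11 w * a1 w + g12 w * a2 w + g13 w * a3 w)
    (h2 : ∀ w, deriv a2 w = g20 w * a0 w + g21 w * a1 w + g22 w * a2 w + g23 w * a3 w)
    (h3 : ∀ w, deriv a3 w = g30 w * a0 w + g31 w * a1 w + g32 w * a2 w + g33 w * a3 w)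
    (w0 : ℂ) (i0 : a0 w0 = 0) (i1 : a1 w0 = 0) (i2 : a2 w0 = 0) (i3 : a3 w0 = 0) :
    ∀ w, a0 w = 0 ∧ a1 w = 0 ∧ a2 w = 0 ∧ a3 w = 0 := by
  have key := ode4_zero
    ![![g00,g01,g02,g03],![g10,g11,g12,g13],![g20,g21,g22,g23],![g30,g31,g32,g33]]
    (by intro i j; fin_cases i <;> fin_cases j <;> assumption)
    ![a0,a1,a2,a3]
    (by intro i; fin_cases i <;> assumption)
    (by intro i w; fin_cases i <;> rw [Fin.sum_univ_four]
        · exact h0 w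
        · exact h1 w
        · exact h2 w
        · exact h3 w)
    w0
    (by intro i; fin_cases i <;> assumption)
  intro w
  exact ⟨key w 0, key w 1, key w 2, key w 3⟩

noncomputable def ipi : ℂ := (Real.pi : ℂ) * Complex.I

theorem statement_2 (ell lam mu : ℂ) (hne : lam + mu ^ 2 ≠ 0) (P Q R S : ℂ → ℂ)
    (hP : Differentiable ℂ P) (hQ : Differentiable ℂ Q)
    (hR : Differentiable ℂ R) (hS : Differentiable ℂ S)
    (hsys1 : ∀ w : ℂ, Complex.exp w * deriv P w =
      (mu + (ell - 1) * Complex.exp w) * P w - Q w + Complex.exp (2 * w) * R w)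
    (hsys2 : ∀ w : ℂ, deriv Q w =
      Complex.exp w * ((lam - (ell + 1) * mu * Complex.exp w) * P w + mu * Q w + S w))
    (hsys3 : ∀ w : ℂ, Complex.exp w * deriv R w =
      -(lam + mu ^ 2) * P w + Complex.exp w * (2 * (ell - 1) - mu * Complex.exp w) * R w - S w)
    (hsys4 : ∀ w : ℂ, Complex.exp w * deriv S w =
      -(lam + mu ^ 2) * Q w + Complex.exp (2 * w) * (lam - (ell + 1) * mu * Complex.exp w) * R w
        + ((ell - 1) * Complex.exp w - mu) * S w)
    (hconA : Q (ipi / 2) - mu * P (ipi / 2) + R (ipi / 2) = 0)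
    (hconC1 : mu * P 0 + Q 0 + R 0 = 0)
    (hconC2 : lam * P 0 - mu * Q 0 + S 0 = 0) :
    ∀ w : ℂ,
      P (w + ipi) = Complex.exp (Complex.I * ell * (Real.pi : ℂ)) * (lam + mu ^ 2)⁻¹ *
        (mu * Complex.exp (2 * w) * R w + S w) ∧
      Q (w + ipi) = -Complex.exp (Complex.I * ell * (Real.pi : ℂ)) *
        ((mu * Complex.exp (2 * w) * P w + Q w) +
          mu * (lam + mu ^ 2)⁻¹ * Complex.exp (2 * w) *
            (mu * Complex.exp (2 * w) * R w + S w)) ∧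
      R (w + ipi) = -Complex.exp (Complex.I * ell * (Real.pi : ℂ)) * R w ∧
      S (w + ipi) = Complex.exp (Complex.I * ell * (Real.pi : ℂ)) * ((lam + mu ^ 2) * P w + mu * Complex.exp (2 * w) * R w) := by
  set c0 : ℂ := Complex.exp (Complex.I * ell * (Real.pi : ℂ)) with hc0
  set nu : ℂ := lam + mu ^ 2 with hnu
  set et : ℂ → ℂ := fun w => mu * Complex.exp (2 * w) * P w + Q w with het_def
  set xi : ℂ → ℂ := fun w => nu * P w + mu * Complex.exp (2 * w) * R w + S w with hxi_def
  set be : ℂ → ℂ := fun w => mu * Complex.exp (2 * w) * R w + S w - nu * P w with hbe_def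
  have hEne : ∀ u : ℂ, Complex.exp u ≠ 0 := Complex.exp_ne_zero
  have hEE : ∀ u : ℂ, Complex.exp u * Complex.exp (-u) = 1 := by
    intro u; rw [← Complex.exp_add]; simp
  have e2 : ∀ u : ℂ, Complex.exp (2 * u) = Complex.exp u * Complex.exp u := by
    intro u; rw [two_mul, Complex.exp_add]
  have hipi : Complex.exp ipi = -1 := by
    rw [ipi]; exact Complex.exp_pi_mul_I
  -- basic hasDerivAt facts
  have hPd : ∀ u : ℂ, HasDerivAt P (deriv P u) u := fun u => (hP u).hasDerivAt
  have hQd : ∀ u : ℂ, HasDerivAt Q (deriv Q u) u := fun u => (hQ u).hasDerivAt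
  have hRd : ∀ u : ℂ, HasDerivAt R (deriv R u) u := fun u => (hR u).hasDerivAt
  have hSd : ∀ u : ℂ, HasDerivAt S (deriv S u) u := fun u => (hS u).hasDerivAt
  have hEd : ∀ u : ℂ, HasDerivAt (fun x : ℂ => Complex.exp (2 * x)) (2 * Complex.exp (2 * u)) u := by
    intro u
    simpa [mul_comm] using ((hasDerivAt_id u).const_mul (2:ℂ)).cexp
  -- master derivative lemmas
  have het' : ∀ u : ℂ, HasDerivAt et (Complex.exp u * xi u) u := by
    intro u
    have raw : HasDerivAt et (mu * (2 * Complex.exp (2*u)) * P u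
        + mu * Complex.exp (2*u) * deriv P u + deriv Q u) u := by
      rw [het_def]
      exact (((hEd u).const_mul mu).mul (hPd u)).add (hQd u)
    have key : mu * (2 * Complex.exp (2*u)) * P u
        + mu * Complex.exp (2*u) * deriv P u + deriv Q u = Complex.exp u * xi u := by
      have h1 := hsys1 u
      have h2 := hsys2 u
      rw [hxi_def]
      simp only []
      rw [e2 u] at h1 ⊢
      linear_combination (mu * Complex.exp u) * h1 + h2
    rwa [key] at raw
  have hrr' : ∀ u : ℂ, HasDerivAt R (2*(ell-1) * R u - Complex.exp (-u) * xi u) u := by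
    intro u
    have key : deriv R u = 2*(ell-1) * R u - Complex.exp (-u) * xi u := by
      apply mul_left_cancel₀ (hEne u)
      have h3 := hsys3 u
      rw [hxi_def]
      simp only []
      rw [e2 u]
      linear_combination h3 + (nu * P u + mu * (Complex.exp u * Complex.exp u) * R u + S u) * hEE u
    rw [← key]; exact hRd u
  have hxi' : ∀ u : ℂ, HasDerivAt xi ((ell-1) * xi u - mu * (Complex.exp u + Complex.exp (-u)) * be u
      + 2 * nu * (Complex.exp u * R u - Complex.exp (-u) * et u)) u := by
    intro u
    have raw : HasDerivAt xi (nu * deriv P u + (mu * (2 * Complex.exp (2*u)) * R u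
        + mu * Complex.exp (2*u) * deriv R u) + deriv S u) u := by
      rw [hxi_def]
      exact (((hPd u).const_mul nu).add (((hEd u).const_mul mu).mul (hRd u))).add (hSd u)
    have key : nu * deriv P u + (mu * (2 * Complex.exp (2*u)) * R u
        + mu * Complex.exp (2*u) * deriv R u) + deriv S u
        = (ell-1) * xi u - mu * (Complex.exp u + Complex.exp (-u)) * be u
          + 2 * nu * (Complex.exp u * R u - Complex.exp (-u) * et u) := by
      apply mul_left_cancel₀ (hEne u)
      have h1 := hsys1 u
      have h3 := hsys3 u
      have h4 := hsys4 u
      rw [hxi_def, hbe_def, het_def]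
      simp only []
      rw [e2 u] at h1 h4 ⊢
      linear_combination nu * h1 + (mu * Complex.exp u * Complex.exp u) * h3 + h4
        + (mu * (mu * (Complex.exp u * Complex.exp u) * R u + S u - nu * P u)
          + 2 * nu * (mu * (Complex.exp u * Complex.exp u) * P u + Q u)) * hEE u
    rwa [key] at raw
  have hbe' : ∀ u : ℂ, HasDerivAt be ((ell-1) * be u
      - mu * (Complex.exp u + Complex.exp (-u)) * xi u) u := by
    intro u
    have raw : HasDerivAt be ((mu * (2 * Complex.exp (2*u)) * R u
        + mu * Complex.exp (2*u) * deriv R u) + deriv S u - nu * deriv P u) u := by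
      rw [hbe_def]
      exact ((((hEd u).const_mul mu).mul (hRd u)).add (hSd u)).sub ((hPd u).const_mul nu)
    have key : (mu * (2 * Complex.exp (2*u)) * R u
        + mu * Complex.exp (2*u) * deriv R u) + deriv S u - nu * deriv P u
        = (ell-1) * be u - mu * (Complex.exp u + Complex.exp (-u)) * xi u := by
      apply mul_left_cancel₀ (hEne u)
      have h1 := hsys1 u
      have h3 := hsys3 u
      have h4 := hsys4 u
      rw [hbe_def, hxi_def]
      simp only []
      rw [e2 u] at h1 h4 ⊢
      linear_combination (-nu) * h1 + (mu * Complex.exp u * Complex.exp u) * h3 + h4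
        + (mu * (nu * P u + mu * (Complex.exp u * Complex.exp u) * R u + S u)) * hEE u
    rwa [key] at raw
  have hipi_def : ipi = (Real.pi : ℂ) * Complex.I := rfl
  have hA : ∀ u : ℂ, Complex.exp (ipi - u) = -Complex.exp (-u) := by
    intro u; rw [sub_eq_add_neg, Complex.exp_add, hipi]; ring
  have hB : ∀ u : ℂ, Complex.exp (-(ipi - u)) = -Complex.exp u := by
    intro u
    rw [neg_sub, sub_eq_add_neg, Complex.exp_add, Complex.exp_neg, hipi]
    norm_num
  have hkd : ∀ u : ℂ, HasDerivAt (fun x : ℂ => Complex.exp (2*(ell-1)*x))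
      (2*(ell-1) * Complex.exp (2*(ell-1)*u)) u := by
    intro u
    simpa [mul_comm] using ((hasDerivAt_id u).const_mul (2*(ell-1))).cexp
  have hcompI : ∀ (F DF : ℂ → ℂ), (∀ u, HasDerivAt F (DF u) u) →
      ∀ u : ℂ, HasDerivAt (fun x => F (ipi - x)) (-DF (ipi - u)) u := by
    intro F DF hF u
    have h := HasDerivAt.comp u (hF (ipi - u)) ((hasDerivAt_id u).const_sub ipi)
    simpa [Function.comp_def] using h
  have hcompN : ∀ (F DF : ℂ → ℂ), (∀ u, HasDerivAt F (DF u) u) →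
      ∀ u : ℂ, HasDerivAt (fun x => F (-x)) (-DF (-u)) u := by
    intro F DF hF u
    have h := HasDerivAt.comp u (hF (-u)) ((hasDerivAt_id u).neg)
    simpa [Function.comp_def] using h
  have hk : Complex.exp (2*(ell-1)*(ipi/2)) = -c0 := by
    have harg : 2*(ell-1)*(ipi/2) = Complex.I * ell * (Real.pi:ℂ) + -ipi := by
      rw [hipi_def]; ring
    rw [harg, Complex.exp_add, Complex.exp_neg, hipi, ← hc0]
    norm_num
  -- Instantiation I : reflection around ipi/2
  have hI := ode4_zero'
    (fun _ => 2*(ell-1)) (fun _ => 0) (fun u => -Complex.exp (-u)) (fun _ => 0)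
    (fun _ => 0) (fun _ => 0) (fun u => Complex.exp u) (fun _ => 0)
    (fun u => 2*nu*Complex.exp u) (fun u => -(2*nu*Complex.exp (-u))) (fun _ => ell-1)
      (fun u => -(mu*(Complex.exp u + Complex.exp (-u))))
    (fun _ => 0) (fun _ => 0) (fun u => -(mu*(Complex.exp u + Complex.exp (-u)))) (fun _ => ell-1)
    (by fun_prop) (by fun_prop) (by fun_prop) (by fun_prop)
    (by fun_prop) (by fun_prop) (by fun_prop) (by fun_prop)
    (by fun_prop) (by fun_prop) (by fun_prop) (by fun_prop)
    (by fun_prop) (by fun_prop) (by fun_prop) (by fun_prop)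
    (fun u => Complex.exp (2*(ell-1)*u) * et (ipi - u) - c0 * R u)
    (fun u => Complex.exp (2*(ell-1)*u) * R (ipi - u) - c0 * et u)
    (fun u => -(Complex.exp (2*(ell-1)*u) * xi (ipi - u)) - c0 * xi u)
    (fun u => -(Complex.exp (2*(ell-1)*u) * be (ipi - u)) - c0 * be u)
    (fun u => (((hkd u).mul (hcompI et _ het' u)).sub ((hrr' u).const_mul c0)).differentiableAt)
    (fun u => (((hkd u).mul (hcompI R _ hrr' u)).sub ((het' u).const_mul c0)).differentiableAt)
    (fun u => ((((hkd u).mul (hcompI xi _ hxi' u)).neg).sub ((hxi' u).const_mul c0)).differentiableAt)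
    (fun u => ((((hkd u).mul (hcompI be _ hbe' u)).neg).sub ((hbe' u).const_mul c0)).differentiableAt)
    (by
      intro u
      have hd : HasDerivAt (fun x => Complex.exp (2*(ell-1)*x) * et (ipi - x) - c0 * R x)
          (2*(ell-1) * Complex.exp (2*(ell-1)*u) * et (ipi - u)
            + Complex.exp (2*(ell-1)*u) * -(Complex.exp (ipi - u) * xi (ipi - u))
            - c0 * (2*(ell-1) * R u - Complex.exp (-u) * xi u)) u :=
        ((hkd u).mul (hcompI et _ het' u)).sub ((hrr' u).const_mul c0)
      rw [hd.deriv, hA u]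
      ring)
    (by
      intro u
      have hd : HasDerivAt (fun x => Complex.exp (2*(ell-1)*x) * R (ipi - x) - c0 * et x)
          (2*(ell-1) * Complex.exp (2*(ell-1)*u) * R (ipi - u)
            + Complex.exp (2*(ell-1)*u)
              * -(2*(ell-1) * R (ipi - u) - Complex.exp (-(ipi - u)) * xi (ipi - u))
            - c0 * (Complex.exp u * xi u)) u :=
        ((hkd u).mul (hcompI R _ hrr' u)).sub ((het' u).const_mul c0)
      rw [hd.deriv, hB u]
      ring)
    (by
      intro u
      have hd : HasDerivAt (fun x => -(Complex.exp (2*(ell-1)*x) * xi (ipi - x)) - c0 * xi x)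
          (-(2*(ell-1) * Complex.exp (2*(ell-1)*u) * xi (ipi - u)
            + Complex.exp (2*(ell-1)*u)
              * -((ell-1) * xi (ipi - u)
                - mu * (Complex.exp (ipi - u) + Complex.exp (-(ipi - u))) * be (ipi - u)
                + 2*nu*(Complex.exp (ipi - u) * R (ipi - u)
                  - Complex.exp (-(ipi - u)) * et (ipi - u))))
            - c0 * ((ell-1) * xi u - mu * (Complex.exp u + Complex.exp (-u)) * be u
              + 2*nu*(Complex.exp u * R u - Complex.exp (-u) * et u))) u :=
        (((hkd u).mul (hcompI xi _ hxi' u)).neg).sub ((hxi' u).const_mul c0)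
      rw [hd.deriv, hA u, hB u]
      ring)
    (by
      intro u
      have hd : HasDerivAt (fun x => -(Complex.exp (2*(ell-1)*x) * be (ipi - x)) - c0 * be x)
          (-(2*(ell-1) * Complex.exp (2*(ell-1)*u) * be (ipi - u)
            + Complex.exp (2*(ell-1)*u)
              * -((ell-1) * be (ipi - u)
                - mu * (Complex.exp (ipi - u) + Complex.exp (-(ipi - u))) * xi (ipi - u)))
            - c0 * ((ell-1) * be u - mu * (Complex.exp u + Complex.exp (-u)) * xi u)) u :=
        (((hkd u).mul (hcompI be _ hbe' u)).neg).sub ((hbe' u).const_mul c0)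
      rw [hd.deriv, hA u, hB u]
      ring)
    (ipi/2)
    (by
      beta_reduce
      rw [show ipi - ipi/2 = ipi/2 by ring, hk]
      simp only [het_def]
      rw [show 2*(ipi/2) = ipi by ring, hipi]
      linear_combination (-c0) * hconA)
    (by
      beta_reduce
      rw [show ipi - ipi/2 = ipi/2 by ring, hk]
      simp only [het_def]
      rw [show 2*(ipi/2) = ipi by ring, hipi]
      linear_combination (-c0) * hconA)
    (by beta_reduce; rw [show ipi - ipi/2 = ipi/2 by ring, hk]; ring)
    (by beta_reduce; rw [show ipi - ipi/2 = ipi/2 by ring, hk]; ring)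
  -- Instantiation II : reflection around 0
  have hII := ode4_zero'
    (fun _ => 2*(ell-1)) (fun _ => 0) (fun u => -Complex.exp (-u)) (fun _ => 0)
    (fun _ => 0) (fun _ => 0) (fun u => Complex.exp u) (fun _ => 0)
    (fun u => 2*nu*Complex.exp u) (fun u => -(2*nu*Complex.exp (-u))) (fun _ => ell-1)
      (fun u => -(mu*(Complex.exp u + Complex.exp (-u))))
    (fun _ => 0) (fun _ => 0) (fun u => -(mu*(Complex.exp u + Complex.exp (-u)))) (fun _ => ell-1)
    (by fun_prop) (by fun_prop) (by fun_prop) (by fun_prop)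
    (by fun_prop) (by fun_prop) (by fun_prop) (by fun_prop)
    (by fun_prop) (by fun_prop) (by fun_prop) (by fun_prop)
    (by fun_prop) (by fun_prop) (by fun_prop) (by fun_prop)
    (fun u => -(Complex.exp (2*(ell-1)*u) * et (-u)) - R u)
    (fun u => -(Complex.exp (2*(ell-1)*u) * R (-u)) - et u)
    (fun u => -(Complex.exp (2*(ell-1)*u) * xi (-u)) - xi u)
    (fun u => Complex.exp (2*(ell-1)*u) * be (-u) - be u)
    (fun u => ((((hkd u).mul (hcompN et _ het' u)).neg).sub (hRd u)).differentiableAt)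
    (fun u => ((((hkd u).mul (hcompN R _ hrr' u)).neg).sub (het' u)).differentiableAt)
    (fun u => ((((hkd u).mul (hcompN xi _ hxi' u)).neg).sub (hxi' u)).differentiableAt)
    (fun u => (((hkd u).mul (hcompN be _ hbe' u)).sub (hbe' u)).differentiableAt)
    (by
      intro u
      have hd : HasDerivAt (fun x => -(Complex.exp (2*(ell-1)*x) * et (-x)) - R x)
          (-(2*(ell-1) * Complex.exp (2*(ell-1)*u) * et (-u)
            + Complex.exp (2*(ell-1)*u) * -(Complex.exp (-u) * xi (-u)))
            - (2*(ell-1) * R u - Complex.exp (-u) * xi u)) u :=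
        (((hkd u).mul (hcompN et _ het' u)).neg).sub (hrr' u)
      rw [hd.deriv]
      ring)
    (by
      intro u
      have hd : HasDerivAt (fun x => -(Complex.exp (2*(ell-1)*x) * R (-x)) - et x)
          (-(2*(ell-1) * Complex.exp (2*(ell-1)*u) * R (-u)
            + Complex.exp (2*(ell-1)*u)
              * -(2*(ell-1) * R (-u) - Complex.exp (-(-u)) * xi (-u)))
            - Complex.exp u * xi u) u :=
        (((hkd u).mul (hcompN R _ hrr' u)).neg).sub (het' u)
      rw [hd.deriv, neg_neg u]
      ring)
    (by
      intro u
      have hd : HasDerivAt (fun x => -(Complex.exp (2*(ell-1)*x) * xi (-x)) - xi x)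
          (-(2*(ell-1) * Complex.exp (2*(ell-1)*u) * xi (-u)
            + Complex.exp (2*(ell-1)*u)
              * -((ell-1) * xi (-u)
                - mu * (Complex.exp (-u) + Complex.exp (-(-u))) * be (-u)
                + 2*nu*(Complex.exp (-u) * R (-u) - Complex.exp (-(-u)) * et (-u))))
            - ((ell-1) * xi u - mu * (Complex.exp u + Complex.exp (-u)) * be u
              + 2*nu*(Complex.exp u * R u - Complex.exp (-u) * et u))) u :=
        (((hkd u).mul (hcompN xi _ hxi' u)).neg).sub (hxi' u)
      rw [hd.deriv, neg_neg u]
      ring)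
    (by
      intro u
      have hd : HasDerivAt (fun x => Complex.exp (2*(ell-1)*x) * be (-x) - be x)
          (2*(ell-1) * Complex.exp (2*(ell-1)*u) * be (-u)
            + Complex.exp (2*(ell-1)*u)
              * -((ell-1) * be (-u)
                - mu * (Complex.exp (-u) + Complex.exp (-(-u))) * xi (-u))
            - ((ell-1) * be u - mu * (Complex.exp u + Complex.exp (-u)) * xi u)) u :=
        ((hkd u).mul (hcompN be _ hbe' u)).sub (hbe' u)
      rw [hd.deriv, neg_neg u]
      ring)
    0
    (by
      beta_reduce
      rw [neg_zero, show 2*(ell-1)*(0:ℂ) = 0 by ring, Complex.exp_zero]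
      simp only [het_def]
      rw [show 2*(0:ℂ) = 0 by ring, Complex.exp_zero]
      linear_combination -hconC1)
    (by
      beta_reduce
      rw [neg_zero, show 2*(ell-1)*(0:ℂ) = 0 by ring, Complex.exp_zero]
      simp only [het_def]
      rw [show 2*(0:ℂ) = 0 by ring, Complex.exp_zero]
      linear_combination -hconC1)
    (by
      beta_reduce
      rw [neg_zero, show 2*(ell-1)*(0:ℂ) = 0 by ring, Complex.exp_zero]
      simp only [hxi_def]
      rw [show 2*(0:ℂ) = 0 by ring, Complex.exp_zero]
      linear_combination (-2*mu) * hconC1 + (-2:ℂ) * hconC2 + (-2 * P 0) * hnu)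
    (by beta_reduce; rw [neg_zero, show 2*(ell-1)*(0:ℂ) = 0 by ring, Complex.exp_zero]; ring)
  have hkk : ∀ u : ℂ, Complex.exp (2*(ell-1)*(-u)) * Complex.exp (2*(ell-1)*u) = 1 := by
    intro u
    rw [← Complex.exp_add, show 2*(ell-1)*(-u) + 2*(ell-1)*u = 0 by ring, Complex.exp_zero]
  intro w
  obtain ⟨h1I, h2I, h3I, h4I⟩ := hI (-w)
  beta_reduce at h1I h2I h3I h4I
  rw [show ipi - -w = w + ipi by ring] at h1I h2I h3I h4I
  obtain ⟨hIIa, hIIb, hIIc, hIId⟩ := hII w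
  beta_reduce at hIIa hIIb hIIc hIId
  have hetS : et (w + ipi) = -(c0 * et w) := by
    linear_combination Complex.exp (2*(ell-1)*w) * h1I - c0 * hIIb - et (w + ipi) * hkk w
  have hRS : R (w + ipi) = -(c0 * R w) := by
    linear_combination Complex.exp (2*(ell-1)*w) * h2I - c0 * hIIa - R (w + ipi) * hkk w
  have hxiS : xi (w + ipi) = c0 * xi w := by
    linear_combination (-(Complex.exp (2*(ell-1)*w))) * h3I + c0 * hIIc - xi (w + ipi) * hkk w
  have hbeS : be (w + ipi) = -(c0 * be w) := by
    linear_combination (-(Complex.exp (2*(ell-1)*w))) * h4I + (-c0) * hIId - be (w + ipi) * hkk w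
  have hshift : Complex.exp (2*(w+ipi)) = Complex.exp (2*w) := by
    rw [show 2*(w+ipi) = 2*w + 2*(Real.pi:ℂ)*Complex.I by rw [hipi_def]; ring,
      Complex.exp_add, Complex.exp_two_pi_mul_I, mul_one]
  simp only [het_def, hxi_def, hbe_def] at hetS hxiS hbeS
  rw [hshift] at hetS hxiS hbeS
  have hP1' : nu * P (w + ipi) = c0 * (mu * Complex.exp (2*w) * R w + S w) := by
    linear_combination ((1:ℂ)/2) * hxiS - ((1:ℂ)/2) * hbeS
  have hP1 : P (w + ipi) = c0 * nu⁻¹ * (mu * Complex.exp (2*w) * R w + S w) := by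
    field_simp
    have hw2 : Complex.exp (2*w) = Complex.exp (w*2) := by rw [mul_comm]
    linear_combination hP1' + mu * c0 * R w * hw2
  refine ⟨hP1, ?_, ?_, ?_⟩
  · have hQ2 : Q (w + ipi) = -(c0 * (mu * Complex.exp (2*w) * P w + Q w))
        - mu * Complex.exp (2*w) * P (w + ipi) := by
      linear_combination hetS
    rw [hQ2, hP1]
    ring
  · rw [hRS]; ring
  · linear_combination ((1:ℂ)/2) * hxiS + ((1:ℂ)/2) * hbeS - mu * Complex.exp (2*w) * hRS
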